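/- For Hermitian positive definite matrices A and B, the geometric mean is symmetric: A^{1/2}(A^{-1/2} B A^{-1/2})^{1/2} A^{1/2} = B^{1/2}(B^{-1/2} A B^{-1/2})^{1/2} B^{1/2}. -/

import Mathlib

open Matrix
open scoped ComplexOrder Classical

/-- Square root of a matrix: the unique PSD square root when `M` is positive
semidefinite, junk value `0` otherwise. -/
noncomputable def msqrt {m : Type*} [Fintype m] [DecidableEq m] (M : Matrix m m ℂ) :
    Matrix m m ℂ :=
  if h : M.PosSemidef then
    h.1.eigenvectorUnitary.1 * diagonal ((↑) ∘ (√·) ∘ h.1.eigenvalues) *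
      (star h.1.eigenvectorUnitary : Matrix m m ℂ)
  else 0

/-- The matrix geometric mean `G(A,B) = A^{1/2} (A^{-1/2} B A^{-1/2})^{1/2} A^{1/2}`. -/
noncomputable def matGM {m : Type*} [Fintype m] [DecidableEq m] (A B : Matrix m m ℂ) :
    Matrix m m ℂ :=
  msqrt A * msqrt ((msqrt A)⁻¹ * B * (msqrt A)⁻¹) * msqrt A

/-- The PSD square root (replacement for the removed `Matrix.PosSemidef.sqrt`). -/
noncomputable def Matrix.PosSemidef.sqrt {m : Type*} [Fintype m] [DecidableEq m]
    {M : Matrix m m ℂ} (h : M.PosSemidef) : Matrix m m ℂ :=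
  h.1.eigenvectorUnitary.1 * diagonal ((↑) ∘ (√·) ∘ h.1.eigenvalues) *
    (star h.1.eigenvectorUnitary : Matrix m m ℂ)

section SqrtPort
open scoped MatrixOrder

lemma Matrix.PosSemidef.sqrt_eq_cfc_sqrt {m : Type*} [Fintype m] [DecidableEq m]
    {M : Matrix m m ℂ} (h : M.PosSemidef) : h.sqrt = CFC.sqrt M := by
  rw [CFC.sqrt_eq_cfc, cfc_nnreal_eq_real _ M, h.1.cfc_eq]
  simp only [IsHermitian.cfc, Matrix.PosSemidef.sqrt, Real.coe_sqrt, Real.coe_toNNReal']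
  have he : ((↑) ∘ (√·) ∘ h.1.eigenvalues : m → ℂ) =
      ((↑) ∘ (fun x : ℝ => √(max x 0)) ∘ h.1.eigenvalues) := by
    funext i
    simp [max_eq_left (h.eigenvalues_nonneg i)]
  rw [he]
  rfl

lemma Matrix.PosSemidef.posSemidef_sqrt {m : Type*} [Fintype m] [DecidableEq m]
    {M : Matrix m m ℂ} (h : M.PosSemidef) : h.sqrt.PosSemidef := by
  rw [h.sqrt_eq_cfc_sqrt]; exact (CFC.sqrt_nonneg M).posSemidef

lemma Matrix.PosSemidef.sqrt_mul_self {m : Type*} [Fintype m] [DecidableEq m]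
    {M : Matrix m m ℂ} (h : M.PosSemidef) : h.sqrt * h.sqrt = M := by
  rw [h.sqrt_eq_cfc_sqrt]; exact CFC.sqrt_mul_sqrt_self M h.nonneg

lemma Matrix.PosSemidef.eq_sqrt_of_sq_eq {m : Type*} [Fintype m] [DecidableEq m]
    {A B : Matrix m m ℂ} (hA : A.PosSemidef) (hB : B.PosSemidef) (hAB : A ^ 2 = B) :
    A = hB.sqrt := by
  rw [hB.sqrt_eq_cfc_sqrt]
  exact (CFC.sqrt_unique (by rw [← sq]; exact hAB) hA.nonneg).symm

end SqrtPort

lemma msqrt_eq {m : Type*} [Fintype m] [DecidableEq m] {M : Matrix m m ℂ}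
    (h : M.PosSemidef) : msqrt M = h.sqrt := dif_pos h

lemma msqrt_posSemidef {m : Type*} [Fintype m] [DecidableEq m] {M : Matrix m m ℂ}
    (h : M.PosSemidef) : (msqrt M).PosSemidef := by
  rw [msqrt_eq h]; exact h.posSemidef_sqrt

lemma msqrt_mul_self {m : Type*} [Fintype m] [DecidableEq m] {M : Matrix m m ℂ}
    (h : M.PosSemidef) : msqrt M * msqrt M = M := by
  rw [msqrt_eq h]; exact h.sqrt_mul_self

lemma msqrt_isUnit_det {m : Type*} [Fintype m] [DecidableEq m] {M : Matrix m m ℂ}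
    (h : M.PosDef) : IsUnit (msqrt M).det := by
  have h1 : (msqrt M).det * (msqrt M).det = M.det := by
    rw [← det_mul, msqrt_mul_self h.posSemidef]
  have h2 : M.det ≠ 0 := h.det_pos.ne'
  exact isUnit_iff_ne_zero.mpr (fun hz => h2 (by rw [← h1, hz, mul_zero]))

lemma msqrt_herm {m : Type*} [Fintype m] [DecidableEq m] {M : Matrix m m ℂ}
    (h : M.PosSemidef) : (msqrt M)ᴴ = msqrt M := (msqrt_posSemidef h).isHermitian

/-- Uniqueness: if `X` is PSD and `X A⁻¹ X = B` then `X = G(A,B)`. -/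
lemma matGM_eq {m : Type*} [Fintype m] [DecidableEq m] {A B X : Matrix m m ℂ}
    (hA : A.PosDef) (hX : X.PosSemidef) (hXB : X * A⁻¹ * X = B) :
    matGM A B = X := by
  set S := msqrt A with hSdef
  have hS : S.PosSemidef := msqrt_posSemidef hA.posSemidef
  have hSS : S * S = A := msqrt_mul_self hA.posSemidef
  have hdet : IsUnit S.det := msqrt_isUnit_det hA
  have hSH : Sᴴ = S := msqrt_herm hA.posSemidef
  have hAinv : A⁻¹ = S⁻¹ * S⁻¹ := by rw [← hSS, Matrix.mul_inv_rev]
  have hY : (S⁻¹ * X * S⁻¹).PosSemidef := by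
    have := hX.mul_mul_conjTranspose_same S⁻¹
    rwa [conjTranspose_nonsing_inv, hSH] at this
  have hsq : (S⁻¹ * X * S⁻¹) ^ 2 = S⁻¹ * B * S⁻¹ := by
    rw [pow_two, ← hXB, hAinv]
    simp only [Matrix.mul_assoc]
  have hCpsd : (S⁻¹ * B * S⁻¹).PosSemidef := hsq ▸ hY.pow 2
  have hkey : S⁻¹ * X * S⁻¹ = hCpsd.sqrt := hY.eq_sqrt_of_sq_eq hCpsd hsq
  rw [matGM, ← hSdef, msqrt_eq hCpsd, ← hkey]
  simp only [Matrix.mul_assoc,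
    Matrix.mul_nonsing_inv_cancel_left _ _ hdet]
  rw [← Matrix.mul_assoc, Matrix.nonsing_inv_mul_cancel_right _ _ hdet]

theorem stmt1 {m : Type*} [Fintype m] [DecidableEq m] {A B : Matrix m m ℂ}
    (hA : A.PosDef) (hB : B.PosDef) : matGM A B = matGM B A := by
  set T := msqrt B with hTdef
  have hT : T.PosSemidef := msqrt_posSemidef hB.posSemidef
  have hTT : T * T = B := msqrt_mul_self hB.posSemidef
  have hdT : IsUnit T.det := msqrt_isUnit_det hB
  have hTH : Tᴴ = T := msqrt_herm hB.posSemidef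
  have hD : (T⁻¹ * A * T⁻¹).PosSemidef := by
    have := hA.posSemidef.mul_mul_conjTranspose_same T⁻¹
    rwa [conjTranspose_nonsing_inv, hTH] at this
  set R := msqrt (T⁻¹ * A * T⁻¹) with hRdef
  have hR : R.PosSemidef := msqrt_posSemidef hD
  have hRR : R * R = T⁻¹ * A * T⁻¹ := msqrt_mul_self hD
  have hRH : Rᴴ = R := msqrt_herm hD
  set X := matGM B A with hXdef
  have hXeq : X = T * R * T := rfl
  have hXpsd : X.PosSemidef := by
    rw [hXeq]
    have h := hR.mul_mul_conjTranspose_same T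
    rwa [hTH] at h
  have key : X * B⁻¹ * X = A := by
    rw [hXeq, ← hTT, Matrix.mul_inv_rev]
    simp only [Matrix.mul_assoc, Matrix.nonsing_inv_mul_cancel_left _ _ hdT,
      Matrix.mul_nonsing_inv_cancel_left _ _ hdT]
    rw [show R * (R * T) = T⁻¹ * A * T⁻¹ * T by
      rw [← Matrix.mul_assoc, hRR]]
    simp only [Matrix.mul_assoc, Matrix.mul_nonsing_inv_cancel_left _ _ hdT,
      Matrix.nonsing_inv_mul_cancel_left _ _ hdT]
    rw [← Matrix.mul_assoc, Matrix.nonsing_inv_mul_cancel_right _ _ hdT]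
  have hdX : IsUnit X.det := by
    have h1 : X.det * B⁻¹.det * X.det = A.det := by rw [← det_mul, ← det_mul, key]
    refine isUnit_iff_ne_zero.mpr fun hz => hA.det_pos.ne' ?_
    rw [← h1, hz, zero_mul, zero_mul]
  have hAinv : A⁻¹ = X⁻¹ * (B * X⁻¹) := by
    have hdB : IsUnit B.det := isUnit_iff_ne_zero.mpr hB.det_pos.ne'
    rw [← key, Matrix.mul_inv_rev, Matrix.mul_inv_rev,
      Matrix.nonsing_inv_nonsing_inv _ hdB]
  have hfinal : X * A⁻¹ * X = B := by
    rw [hAinv, Matrix.mul_nonsing_inv_cancel_left _ _ hdX, Matrix.mul_assoc,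
      Matrix.nonsing_inv_mul _ hdX, Matrix.mul_one]
  exact matGM_eq hA hXpsd hfinal
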